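/- For all natural numbers a and b, the disjunctive sum of a copies of nim 2 and b copies of nim 1 is a misère loss for the player to move if and only if either (a = 0 and b is odd) or (a ≥ 1, a is even and b is even). In particular, in the misère game of Nim restricted to heaps of size at most 2, the losing positions are exactly *1 (up to pairs of *1, which cancel) and the sums of a positive even number of copies of *2. -/

import Mathlib

/-- An impartial game: a position is given by the list of its options
(the positions reachable in one move); both players have the same moves. -/
inductive Game : Type
  | node : List Game → Game

namespace Game

/-- The options of a position. -/
def options : Game → List Game
  | node l => l

/-- Disjunctive sum of two games: a move is made in exactly one component. -/
def add : Game → Game → Game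
  | node l, node r =>
      node ((l.attach.map fun x => add x.1 (node r)) ++
            (r.attach.map fun y => add (node l) y.1))
termination_by g h => sizeOf g + sizeOf h
decreasing_by
  · have := List.sizeOf_lt_of_mem x.2; simp_wf; (try simp only [Game.node.sizeOf_spec] at *); omega
  · have := List.sizeOf_lt_of_mem y.2; simp_wf; (try simp only [Game.node.sizeOf_spec] at *); omega

/-- Misère win (for the player to move): the game has no options,
or some option is a misère loss. -/
def MisereWin : Game → Prop
  | node l => l = [] ∨ ∃ x : {a // a ∈ l}, ¬ MisereWin x.1
decreasing_by
  simp_wf; have := List.sizeOf_lt_of_mem x.2; omega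

/-- Misère indistinguishability: adding any game `T` yields the same misère outcome. -/
def Indist (G H : Game) : Prop :=
  ∀ T : Game, MisereWin (add G T) ↔ MisereWin (add H T)

/-- The Nim-heap of size `n`, whose options are `nim 0, …, nim (n-1)`. -/
def nim : ℕ → Game
  | 0 => node []
  | n + 1 => node ((nim n).options ++ [nim n])

/-- Normal-play win (for the player to move): some option is a normal-play loss.
A player unable to move loses. -/
def NormalWin : Game → Prop
  | node l => ∃ x : {a // a ∈ l}, ¬ NormalWin x.1
decreasing_by
  simp_wf; have := List.sizeOf_lt_of_mem x.2; omega

/-- The Grundy value: the mex of the Grundy values of the options. -/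
noncomputable def grundy : Game → ℕ
  | node l => sInf {n : ℕ | ∀ x : {a // a ∈ l}, grundy x.1 ≠ n}
decreasing_by
  simp_wf; have := List.sizeOf_lt_of_mem x.2; omega

/-- The height of a game: the maximal number of moves in a play from it. -/
def height : Game → ℕ
  | node l => (l.attach.map fun x => height x.1 + 1).foldr max 0
decreasing_by
  simp_wf; have := List.sizeOf_lt_of_mem x.2; omega

/-- A canonical tree: duplicate options are removed, hereditarily. -/
def Canonical : Game → Prop
  | node l => l.Nodup ∧ ∀ x : {a // a ∈ l}, Canonical x.1
decreasing_by
  simp_wf; have := List.sizeOf_lt_of_mem x.2; omega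

/-- Extensional (set-theoretic) equality of game trees. -/
def ExtEq : Game → Game → Prop
  | node l, node r =>
      (∀ x : {a // a ∈ l}, ∃ y : {b // b ∈ r}, ExtEq x.1 y.1) ∧
      (∀ y : {b // b ∈ r}, ∃ x : {a // a ∈ l}, ExtEq x.1 y.1)
termination_by g _ => sizeOf g
decreasing_by
  · have := List.sizeOf_lt_of_mem x.2; simp_wf; (try simp only [Game.node.sizeOf_spec] at *); omega
  · have := List.sizeOf_lt_of_mem x.2; simp_wf; (try simp only [Game.node.sizeOf_spec] at *); omega

/-- The disjunctive sum of `n` copies of a game. -/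
def copies : ℕ → Game → Game
  | 0, _ => node []
  | n + 1, g => add g (copies n g)

/-- `G` is a reducer of `H` if `H` is obtained from `G` by adding reversible
moves `R₁, R₂, …`: the options of `H` are those of `G` together with the `Rⱼ`,
each `Rⱼ` having `G` among its options; when `G` is empty one additionally
requires `H` to be a misère win. -/
def Reducer (G H : Game) : Prop :=
  ∃ Rs : List Game,
    (∀ x, x ∈ H.options ↔ x ∈ G.options ∨ x ∈ Rs) ∧
    (∀ R ∈ Rs, G ∈ R.options) ∧
    (G.options = [] → MisereWin H)

/-- A canonical tree is reduced if its only reducer is itself (as a set of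
options) and all of its options are reduced. -/
def Reduced : Game → Prop
  | node l =>
      (∀ G, Reducer G (node l) → ∀ x, x ∈ G.options ↔ x ∈ l) ∧
      ∀ x : {a // a ∈ l}, Reduced x.1
decreasing_by
  simp_wf; have := List.sizeOf_lt_of_mem x.2; omega

lemma options_node (l : List Game) : (node l).options = l := rfl

lemma sizeOf_lt_of_mem_options {x G : Game} (h : x ∈ G.options) : sizeOf x < sizeOf G := by
  obtain ⟨l⟩ := G
  have h' : x ∈ l := h
  have := List.sizeOf_lt_of_mem h'
  simp only [Game.node.sizeOf_spec]
  omega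

lemma misereWin_iff (l : List Game) :
    MisereWin (node l) ↔ l = [] ∨ ∃ x ∈ l, ¬ MisereWin x := by
  rw [MisereWin]
  simp only [Subtype.exists, exists_prop]

lemma misereWin_iff' (G : Game) :
    MisereWin G ↔ G.options = [] ∨ ∃ x ∈ G.options, ¬ MisereWin x := by
  obtain ⟨l⟩ := G; exact misereWin_iff l

lemma extEq_iff (l r : List Game) :
    ExtEq (node l) (node r) ↔
      ((∀ x ∈ l, ∃ y ∈ r, ExtEq x y) ∧ (∀ y ∈ r, ∃ x ∈ l, ExtEq x y)) := by
  rw [ExtEq]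
  simp only [Subtype.forall, Subtype.exists, exists_prop]

lemma extEq_iff' (G H : Game) :
    ExtEq G H ↔
      ((∀ x ∈ G.options, ∃ y ∈ H.options, ExtEq x y) ∧
       (∀ y ∈ H.options, ∃ x ∈ G.options, ExtEq x y)) := by
  obtain ⟨l⟩ := G; obtain ⟨r⟩ := H; exact extEq_iff l r

lemma mem_options_add {x G H : Game} :
    x ∈ (add G H).options ↔
      (∃ g ∈ G.options, x = add g H) ∨ (∃ h ∈ H.options, x = add G h) := by
  obtain ⟨l⟩ := G; obtain ⟨r⟩ := H
  rw [add]
  simp only [options_node, List.mem_append, List.mem_map, List.mem_attach, true_and,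
    Subtype.exists, exists_prop]
  constructor
  · rintro (⟨g, hg, rfl⟩ | ⟨h, hh, rfl⟩)
    · exact Or.inl ⟨g, hg, rfl⟩
    · exact Or.inr ⟨h, hh, rfl⟩
  · rintro (⟨g, hg, rfl⟩ | ⟨h, hh, rfl⟩)
    · exact Or.inl ⟨g, hg, rfl⟩
    · exact Or.inr ⟨h, hh, rfl⟩

theorem extEq_refl : ∀ G : Game, ExtEq G G
  | node l => by
    rw [extEq_iff]
    exact ⟨fun x hx => ⟨x, hx, extEq_refl x⟩, fun x hx => ⟨x, hx, extEq_refl x⟩⟩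
decreasing_by
  · have := List.sizeOf_lt_of_mem hx; simp only [Game.node.sizeOf_spec]; omega
  · have := List.sizeOf_lt_of_mem hx; simp only [Game.node.sizeOf_spec]; omega

theorem extEq_symm : ∀ {G H : Game}, ExtEq G H → ExtEq H G
  | node l, node r, h => by
    rw [extEq_iff] at h ⊢
    refine ⟨fun y hy => ?_, fun x hx => ?_⟩
    · obtain ⟨x, hx, he⟩ := h.2 y hy
      exact ⟨x, hx, extEq_symm he⟩
    · obtain ⟨y, hy, he⟩ := h.1 x hx
      exact ⟨y, hy, extEq_symm he⟩
termination_by G H _ => sizeOf G + sizeOf H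
decreasing_by
  · have h1 := List.sizeOf_lt_of_mem hx; have h2 := List.sizeOf_lt_of_mem hy
    simp only [Game.node.sizeOf_spec]; omega
  · have h1 := List.sizeOf_lt_of_mem hx; have h2 := List.sizeOf_lt_of_mem hy
    simp only [Game.node.sizeOf_spec]; omega

theorem extEq_trans : ∀ {G H K : Game}, ExtEq G H → ExtEq H K → ExtEq G K
  | node l, node m, node r, h1, h2 => by
    rw [extEq_iff] at h1 h2 ⊢
    refine ⟨fun x hx => ?_, fun z hz => ?_⟩
    · obtain ⟨y, hy, e1⟩ := h1.1 x hx
      obtain ⟨z, hz, e2⟩ := h2.1 y hy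
      exact ⟨z, hz, extEq_trans e1 e2⟩
    · obtain ⟨y, hy, e2⟩ := h2.2 z hz
      obtain ⟨x, hx, e1⟩ := h1.2 y hy
      exact ⟨x, hx, extEq_trans e1 e2⟩
termination_by G H K _ _ => sizeOf G + sizeOf H + sizeOf K
decreasing_by
  · have a1 := List.sizeOf_lt_of_mem hx; have a2 := List.sizeOf_lt_of_mem hy
    have a3 := List.sizeOf_lt_of_mem hz; simp only [Game.node.sizeOf_spec]; omega
  · have a1 := List.sizeOf_lt_of_mem hx; have a2 := List.sizeOf_lt_of_mem hy
    have a3 := List.sizeOf_lt_of_mem hz; simp only [Game.node.sizeOf_spec]; omega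

theorem misereWin_of_extEq : ∀ {G H : Game}, ExtEq G H → MisereWin G → MisereWin H
  | node l, node r, h, hw => by
    rw [extEq_iff] at h
    rw [misereWin_iff] at hw ⊢
    rcases hw with rfl | ⟨x, hx, hloss⟩
    · left
      cases r with
      | nil => rfl
      | cons y ys =>
        obtain ⟨x, hx, -⟩ := h.2 y (by simp)
        simp at hx
    · obtain ⟨y, hy, hxy⟩ := h.1 x hx
      exact Or.inr ⟨y, hy, fun hwy => hloss (misereWin_of_extEq (extEq_symm hxy) hwy)⟩
termination_by G H _ _ => sizeOf G + sizeOf H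
decreasing_by
  have a1 := List.sizeOf_lt_of_mem hx; have a2 := List.sizeOf_lt_of_mem hy
  simp only [Game.node.sizeOf_spec]; omega

lemma misereWin_congr {G H : Game} (h : ExtEq G H) : MisereWin G ↔ MisereWin H :=
  ⟨misereWin_of_extEq h, misereWin_of_extEq (extEq_symm h)⟩

theorem extEq_add : ∀ {G G' H H' : Game}, ExtEq G G' → ExtEq H H' →
    ExtEq (add G H) (add G' H')
  | G, G', H, H', hG, hH => by
    rw [extEq_iff']
    constructor
    · intro x hx
      rw [mem_options_add] at hx
      rcases hx with ⟨g, hg, rfl⟩ | ⟨h, hh, rfl⟩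
      · obtain ⟨g', hg', he⟩ := ((extEq_iff' _ _).1 hG).1 g hg
        exact ⟨add g' H', mem_options_add.2 (Or.inl ⟨g', hg', rfl⟩), extEq_add he hH⟩
      · obtain ⟨h', hh', he⟩ := ((extEq_iff' _ _).1 hH).1 h hh
        exact ⟨add G' h', mem_options_add.2 (Or.inr ⟨h', hh', rfl⟩), extEq_add hG he⟩
    · intro y hy
      rw [mem_options_add] at hy
      rcases hy with ⟨g', hg', rfl⟩ | ⟨h', hh', rfl⟩
      · obtain ⟨g, hg, he⟩ := ((extEq_iff' _ _).1 hG).2 g' hg'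
        exact ⟨add g H, mem_options_add.2 (Or.inl ⟨g, hg, rfl⟩), extEq_add he hH⟩
      · obtain ⟨h, hh, he⟩ := ((extEq_iff' _ _).1 hH).2 h' hh'
        exact ⟨add G h, mem_options_add.2 (Or.inr ⟨h, hh, rfl⟩), extEq_add hG he⟩
termination_by G G' H H' _ _ => sizeOf G + sizeOf G' + sizeOf H + sizeOf H'
decreasing_by
  · have a1 := sizeOf_lt_of_mem_options hg; have a2 := sizeOf_lt_of_mem_options hg'; omega
  · have a1 := sizeOf_lt_of_mem_options hh; have a2 := sizeOf_lt_of_mem_options hh'; omega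
  · have a1 := sizeOf_lt_of_mem_options hg; have a2 := sizeOf_lt_of_mem_options hg'; omega
  · have a1 := sizeOf_lt_of_mem_options hh; have a2 := sizeOf_lt_of_mem_options hh'; omega

theorem extEq_add_comm : ∀ G H : Game, ExtEq (add G H) (add H G)
  | G, H => by
    rw [extEq_iff']
    constructor
    · intro x hx
      rw [mem_options_add] at hx
      rcases hx with ⟨g, hg, rfl⟩ | ⟨h, hh, rfl⟩
      · exact ⟨add H g, mem_options_add.2 (Or.inr ⟨g, hg, rfl⟩), extEq_add_comm g H⟩
      · exact ⟨add h G, mem_options_add.2 (Or.inl ⟨h, hh, rfl⟩), extEq_add_comm G h⟩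
    · intro y hy
      rw [mem_options_add] at hy
      rcases hy with ⟨h, hh, rfl⟩ | ⟨g, hg, rfl⟩
      · exact ⟨add G h, mem_options_add.2 (Or.inr ⟨h, hh, rfl⟩), extEq_add_comm G h⟩
      · exact ⟨add g H, mem_options_add.2 (Or.inl ⟨g, hg, rfl⟩), extEq_add_comm g H⟩
termination_by G H => sizeOf G + sizeOf H
decreasing_by
  · have := sizeOf_lt_of_mem_options hg; omega
  · have := sizeOf_lt_of_mem_options hh; omega
  · have := sizeOf_lt_of_mem_options hh; omega
  · have := sizeOf_lt_of_mem_options hg; omega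

theorem extEq_add_assoc : ∀ G H K : Game, ExtEq (add (add G H) K) (add G (add H K))
  | G, H, K => by
    rw [extEq_iff']
    constructor
    · intro x hx
      rw [mem_options_add] at hx
      rcases hx with ⟨w, hw, rfl⟩ | ⟨k, hk, rfl⟩
      · rw [mem_options_add] at hw
        rcases hw with ⟨g, hg, rfl⟩ | ⟨h, hh, rfl⟩
        · exact ⟨add g (add H K), mem_options_add.2 (Or.inl ⟨g, hg, rfl⟩),
            extEq_add_assoc g H K⟩
        · exact ⟨add G (add h K),
            mem_options_add.2 (Or.inr ⟨add h K, mem_options_add.2 (Or.inl ⟨h, hh, rfl⟩), rfl⟩),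
            extEq_add_assoc G h K⟩
      · exact ⟨add G (add H k),
          mem_options_add.2 (Or.inr ⟨add H k, mem_options_add.2 (Or.inr ⟨k, hk, rfl⟩), rfl⟩),
          extEq_add_assoc G H k⟩
    · intro y hy
      rw [mem_options_add] at hy
      rcases hy with ⟨g, hg, rfl⟩ | ⟨w, hw, rfl⟩
      · exact ⟨add (add g H) K,
          mem_options_add.2 (Or.inl ⟨add g H, mem_options_add.2 (Or.inl ⟨g, hg, rfl⟩), rfl⟩),
          extEq_add_assoc g H K⟩
      · rw [mem_options_add] at hw
        rcases hw with ⟨h, hh, rfl⟩ | ⟨k, hk, rfl⟩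
        · exact ⟨add (add G h) K,
            mem_options_add.2 (Or.inl ⟨add G h, mem_options_add.2 (Or.inr ⟨h, hh, rfl⟩), rfl⟩),
            extEq_add_assoc G h K⟩
        · exact ⟨add (add G H) k, mem_options_add.2 (Or.inr ⟨k, hk, rfl⟩),
            extEq_add_assoc G H k⟩
termination_by G H K => sizeOf G + sizeOf H + sizeOf K
decreasing_by
  · have := sizeOf_lt_of_mem_options hg; omega
  · have := sizeOf_lt_of_mem_options hh; omega
  · have := sizeOf_lt_of_mem_options hk; omega
  · have := sizeOf_lt_of_mem_options hg; omega
  · have := sizeOf_lt_of_mem_options hh; omega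
  · have := sizeOf_lt_of_mem_options hk; omega

theorem extEq_nil_add : ∀ G : Game, ExtEq (add (node []) G) G
  | G => by
    rw [extEq_iff']
    constructor
    · intro x hx
      rw [mem_options_add] at hx
      rcases hx with ⟨g, hg, rfl⟩ | ⟨h, hh, rfl⟩
      · simp [options_node] at hg
      · exact ⟨h, hh, extEq_nil_add h⟩
    · intro y hy
      exact ⟨add (node []) y, mem_options_add.2 (Or.inr ⟨y, hy, rfl⟩), extEq_nil_add y⟩
termination_by G => sizeOf G
decreasing_by
  · have := sizeOf_lt_of_mem_options hh; omega
  · have := sizeOf_lt_of_mem_options hy; omega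

lemma extEq_add_left (G : Game) {H H' : Game} (h : ExtEq H H') :
    ExtEq (add G H) (add G H') := extEq_add (extEq_refl G) h

lemma extEq_add_right {G G' : Game} (h : ExtEq G G') (H : Game) :
    ExtEq (add G H) (add G' H) := extEq_add h (extEq_refl H)

/-- `(u + C) + B ≈ C + (u + B)`. -/
lemma extEq_shift (u C B : Game) : ExtEq (add (add u C) B) (add C (add u B)) :=
  extEq_trans (extEq_add_right (extEq_add_comm u C) B) (extEq_add_assoc C u B)

/-- `g + (u + C) ≈ u + (g + C)`. -/
lemma extEq_swap (g u C : Game) : ExtEq (add g (add u C)) (add u (add g C)) :=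
  extEq_trans (extEq_symm (extEq_add_assoc g u C))
    (extEq_trans (extEq_add_right (extEq_add_comm g u) C) (extEq_add_assoc u g C))

lemma copies_succ (n : ℕ) (g : Game) : copies (n + 1) g = add g (copies n g) := rfl

lemma options_copies_zero (g : Game) : (copies 0 g).options = [] := rfl

lemma copies_opt (g : Game) :
    ∀ n, ∀ x ∈ (copies (n + 1) g).options, ∃ u ∈ g.options, ExtEq x (add u (copies n g)) := by
  intro n
  induction n with
  | zero =>
    intro x hx
    rw [copies_succ, mem_options_add] at hx
    rcases hx with ⟨u, hu, rfl⟩ | ⟨y, hy, rfl⟩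
    · exact ⟨u, hu, extEq_refl _⟩
    · rw [options_copies_zero] at hy; simp at hy
  | succ m ih =>
    intro x hx
    rw [copies_succ, mem_options_add] at hx
    rcases hx with ⟨u, hu, rfl⟩ | ⟨y, hy, rfl⟩
    · exact ⟨u, hu, extEq_refl _⟩
    · obtain ⟨u, hu, he⟩ := ih y hy
      exact ⟨u, hu, extEq_trans (extEq_add_left g he) (extEq_swap g u (copies m g))⟩

lemma options_nim_one : (nim 1).options = [nim 0] := rfl
lemma options_nim_two : (nim 2).options = [nim 0, nim 1] := rfl
lemma nim_zero : nim 0 = node [] := rfl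

/-- The sum `a·*2 + b·*1`. -/
abbrev S (a b : ℕ) : Game := add (copies a (nim 2)) (copies b (nim 1))

lemma options_S_nil {a b : ℕ} (h : (S a b).options = []) : a = 0 ∧ b = 0 := by
  constructor
  · by_contra ha
    obtain ⟨a', rfl⟩ : ∃ a', a = a' + 1 := ⟨a - 1, by omega⟩
    have hm : add (nim 1) (copies a' (nim 2)) ∈ (copies (a' + 1) (nim 2)).options := by
      rw [copies_succ]
      exact mem_options_add.2 (Or.inl ⟨nim 1, by rw [options_nim_two]; simp, rfl⟩)
    have : add (add (nim 1) (copies a' (nim 2))) (copies b (nim 1)) ∈ (S (a' + 1) b).options :=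
      mem_options_add.2 (Or.inl ⟨_, hm, rfl⟩)
    rw [h] at this; simp at this
  · by_contra hb
    obtain ⟨b', rfl⟩ : ∃ b', b = b' + 1 := ⟨b - 1, by omega⟩
    have hm : add (nim 0) (copies b' (nim 1)) ∈ (copies (b' + 1) (nim 1)).options := by
      rw [copies_succ]
      exact mem_options_add.2 (Or.inl ⟨nim 0, by rw [options_nim_one]; simp, rfl⟩)
    have : add (copies a (nim 2)) (add (nim 0) (copies b' (nim 1))) ∈ (S a (b' + 1)).options :=
      mem_options_add.2 (Or.inr ⟨_, hm, rfl⟩)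
    rw [h] at this; simp at this

lemma options_S_nil' : (S 0 0).options = [] := by
  rw [List.eq_nil_iff_forall_not_mem]
  intro x hx
  rw [mem_options_add] at hx
  rcases hx with ⟨g, hg, -⟩ | ⟨h, hh, -⟩
  · rw [options_copies_zero] at hg; simp at hg
  · rw [options_copies_zero] at hh; simp at hh

lemma moves_classify (a b : ℕ) : ∀ x ∈ (S a b).options,
    (∃ a', a = a' + 1 ∧ (ExtEq x (S a' (b + 1)) ∨ ExtEq x (S a' b))) ∨
    (∃ b', b = b' + 1 ∧ ExtEq x (S a b')) := by
  intro x hx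
  rw [mem_options_add] at hx
  rcases hx with ⟨g, hg, rfl⟩ | ⟨h, hh, rfl⟩
  · obtain ⟨a', rfl⟩ : ∃ a', a = a' + 1 := by
      rcases a with _ | a'
      · rw [options_copies_zero] at hg; simp at hg
      · exact ⟨a', rfl⟩
    obtain ⟨u, hu, he⟩ := copies_opt (nim 2) a' g hg
    have h1 : ExtEq (add g (copies b (nim 1)))
        (add (add u (copies a' (nim 2))) (copies b (nim 1))) :=
      extEq_add_right he _
    rw [options_nim_two] at hu
    simp only [List.mem_cons, List.mem_singleton, List.not_mem_nil, or_false] at hu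
    rcases hu with rfl | rfl
    · -- u = nim 0 = node []
      refine Or.inl ⟨a', rfl, Or.inr ?_⟩
      refine extEq_trans h1 ?_
      rw [nim_zero]
      exact extEq_add_right (extEq_nil_add _) _
    · -- u = nim 1
      refine Or.inl ⟨a', rfl, Or.inl ?_⟩
      exact extEq_trans h1 (extEq_shift (nim 1) (copies a' (nim 2)) (copies b (nim 1)))
  · obtain ⟨b', rfl⟩ : ∃ b', b = b' + 1 := by
      rcases b with _ | b'
      · rw [options_copies_zero] at hh; simp at hh
      · exact ⟨b', rfl⟩
    obtain ⟨u, hu, he⟩ := copies_opt (nim 1) b' h hh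
    rw [options_nim_one] at hu
    simp only [List.mem_singleton] at hu
    subst hu
    refine Or.inr ⟨b', rfl, ?_⟩
    refine extEq_trans (extEq_add_left _ he) ?_
    rw [nim_zero]
    exact extEq_add_left _ (extEq_nil_add _)

lemma move2a (a b : ℕ) : ∃ x ∈ (S (a + 1) b).options, ExtEq x (S a (b + 1)) := by
  refine ⟨add (add (nim 1) (copies a (nim 2))) (copies b (nim 1)), ?_, ?_⟩
  · exact mem_options_add.2 (Or.inl ⟨_, by
      rw [copies_succ]
      exact mem_options_add.2 (Or.inl ⟨nim 1, by rw [options_nim_two]; simp, rfl⟩), rfl⟩)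
  · exact extEq_shift (nim 1) (copies a (nim 2)) (copies b (nim 1))

lemma move2b (a b : ℕ) : ∃ x ∈ (S (a + 1) b).options, ExtEq x (S a b) := by
  refine ⟨add (add (nim 0) (copies a (nim 2))) (copies b (nim 1)), ?_, ?_⟩
  · exact mem_options_add.2 (Or.inl ⟨_, by
      rw [copies_succ]
      exact mem_options_add.2 (Or.inl ⟨nim 0, by rw [options_nim_two]; simp, rfl⟩), rfl⟩)
  · rw [nim_zero]
    exact extEq_add_right (extEq_nil_add _) _

lemma move1 (a b : ℕ) : ∃ x ∈ (S a (b + 1)).options, ExtEq x (S a b) := by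
  refine ⟨add (copies a (nim 2)) (add (nim 0) (copies b (nim 1))), ?_, ?_⟩
  · exact mem_options_add.2 (Or.inr ⟨_, by
      rw [copies_succ]
      exact mem_options_add.2 (Or.inl ⟨nim 0, by rw [options_nim_one]; simp, rfl⟩), rfl⟩)
  · rw [nim_zero]
    exact extEq_add_left _ (extEq_nil_add _)

lemma mw_rec (a b : ℕ) : MisereWin (S a b) ↔
    (a = 0 ∧ b = 0) ∨
    (∃ a', a = a' + 1 ∧ (¬ MisereWin (S a' (b + 1)) ∨ ¬ MisereWin (S a' b))) ∨
    (∃ b', b = b' + 1 ∧ ¬ MisereWin (S a b')) := by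
  rw [misereWin_iff']
  constructor
  · rintro (hnil | ⟨x, hx, hloss⟩)
    · exact Or.inl (options_S_nil hnil)
    · rcases moves_classify a b x hx with ⟨a', rfl, (he | he)⟩ | ⟨b', rfl, he⟩
      · exact Or.inr (Or.inl ⟨a', rfl, Or.inl fun hw => hloss (misereWin_of_extEq (extEq_symm he) hw)⟩)
      · exact Or.inr (Or.inl ⟨a', rfl, Or.inr fun hw => hloss (misereWin_of_extEq (extEq_symm he) hw)⟩)
      · exact Or.inr (Or.inr ⟨b', rfl, fun hw => hloss (misereWin_of_extEq (extEq_symm he) hw)⟩)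
  · rintro (⟨rfl, rfl⟩ | ⟨a', rfl, (hl | hl)⟩ | ⟨b', rfl, hl⟩)
    · exact Or.inl options_S_nil'
    · obtain ⟨x, hx, he⟩ := move2a a' b
      exact Or.inr ⟨x, hx, fun hw => hl (misereWin_of_extEq he hw)⟩
    · obtain ⟨x, hx, he⟩ := move2b a' b
      exact Or.inr ⟨x, hx, fun hw => hl (misereWin_of_extEq he hw)⟩
    · obtain ⟨x, hx, he⟩ := move1 a b'
      exact Or.inr ⟨x, hx, fun hw => hl (misereWin_of_extEq he hw)⟩

lemma zero_ne_succ_iff (m : ℕ) : (0 = m + 1) ↔ False := ⟨fun h => by omega, False.elim⟩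

lemma main : ∀ n a b : ℕ, 2 * a + b ≤ n →
    (¬ MisereWin (S a b) ↔ ((a = 0 ∧ b % 2 = 1) ∨ (1 ≤ a ∧ a % 2 = 0 ∧ b % 2 = 0))) := by
  intro n
  induction n with
  | zero =>
    intro a b h
    obtain ⟨rfl, rfl⟩ : a = 0 ∧ b = 0 := by omega
    rw [mw_rec]
    simp
  | succ n ih =>
    intro a b h
    rw [mw_rec]
    rcases a with _ | a' <;> rcases b with _ | b'
    · simp
    · simp only [Nat.succ_ne_zero, zero_ne_succ_iff, false_and, and_false, exists_false, or_false, false_or, true_and, and_true,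
        Nat.succ.injEq, exists_eq_left']
      rw [ih 0 b' (by omega)]
      omega
    · simp only [Nat.succ_ne_zero, zero_ne_succ_iff, and_false, false_and, exists_false, or_false, false_or, true_and, and_true,
        Nat.succ.injEq, exists_eq_left']
      rw [ih a' 1 (by omega), ih a' 0 (by omega)]
      omega
    · simp only [Nat.succ_ne_zero, zero_ne_succ_iff, false_and, and_false, exists_false, Nat.succ.injEq, exists_eq_left', false_or, or_false, true_and, and_true]
      rw [ih a' (b' + 2) (by omega), ih a' (b' + 1) (by omega), ih (a' + 1) b' (by omega)]
      omega

end Game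

open Game in
/-- The sum of `a` copies of `nim 2` and `b` copies of `nim 1`
is a misère loss for the player to move iff either `a = 0` and `b` is odd, or
`a ≥ 1`, `a` is even and `b` is even. -/
theorem stmt10 (a b : ℕ) :
    (¬ MisereWin (add (copies a (nim 2)) (copies b (nim 1)))) ↔
      ((a = 0 ∧ Odd b) ∨ (1 ≤ a ∧ Even a ∧ Even b)) := by
  have h := main (2 * a + b) a b le_rfl
  rw [h, Nat.odd_iff, Nat.even_iff, Nat.even_iff]
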